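/- Self-consistency of BH: every j in the BH rejection set S satisfies p_j ≤ α|S|/m, and conversely {j : p_j ≤ α|S|/m} = S, i.e., the BH rejection set is a fixed point of the map R ↦ {j : p_j ≤ α|R|/m}. -/

import Mathlib

/-- The k-th order statistic `p_(k)` of the p-values (1-indexed). -/
noncomputable def orderStat {m : ℕ} (p : Fin m → ℝ) (k : ℕ) : ℝ :=
  (Multiset.sort (Multiset.map p Finset.univ.val) (· ≤ ·)).getD (k - 1) 0

/-- `k* = max{k ∈ [m] : p_(k) ≤ α k / m}`, with `max ∅ = 0`. -/
noncomputable def kstar {m : ℕ} (p : Fin m → ℝ) (α : ℝ) : ℕ :=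
  sSup {k | k ∈ Finset.Icc 1 m ∧ orderStat p k ≤ α * k / m}

/-- The Benjamini–Hochberg rejection set `S = {j : p_j ≤ α k*/m}`. -/
noncomputable def BH {m : ℕ} (p : Fin m → ℝ) (α : ℝ) : Finset (Fin m) :=
  Finset.univ.filter (fun j => p j ≤ α * (kstar p α) / m)

lemma sorted_le_iff_countP {L : List ℝ} (hL : L.Pairwise (· ≤ ·)) {i : ℕ} (hi : i < L.length)
    (t : ℝ) : L[i] ≤ t ↔ i + 1 ≤ L.countP (fun x => decide (x ≤ t)) := by
  have hpw := List.pairwise_iff_getElem.mp hL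
  constructor
  · intro h
    have h1 : (L.take (i+1)).countP (fun x => decide (x ≤ t)) = i + 1 := by
      rw [List.countP_eq_length.mpr, List.length_take]
      · omega
      · intro a ha
        rcases List.mem_iff_getElem.mp ha with ⟨j, hj, rfl⟩
        have hjl : j < L.length := by
          simp only [List.length_take] at hj; omega
        have hji : j ≤ i := by
          simp only [List.length_take] at hj; omega
        simp only [List.getElem_take, decide_eq_true_eq]
        rcases lt_or_eq_of_le hji with hlt | rfl
        · exact le_trans (hpw j i hjl hi hlt) h
        · exact h
    calc i + 1 = (L.take (i+1)).countP (fun x => decide (x ≤ t)) := h1.symm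
      _ ≤ L.countP (fun x => decide (x ≤ t)) := (List.take_sublist _ _).countP_le
  · intro h
    by_contra hgt
    push_neg at hgt
    have hd : (L.drop i).countP (fun x => decide (x ≤ t)) = 0 := by
      rw [List.countP_eq_zero]
      intro a ha
      rcases List.mem_iff_getElem.mp ha with ⟨j, hj, rfl⟩
      have hjl : i + j < L.length := by
        simp only [List.length_drop] at hj; omega
      rw [List.getElem_drop]
      simp only [decide_eq_true_eq, not_le]
      rcases Nat.eq_zero_or_pos j with rfl | hjpos
      · simpa using hgt
      · exact lt_of_lt_of_le hgt (hpw i (i + j) hi hjl (by omega))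
    have : L.countP (fun x => decide (x ≤ t)) ≤ i := by
      conv_lhs => rw [← List.take_append_drop i L]
      rw [List.countP_append, hd, Nat.add_zero]
      calc (L.take i).countP (fun x => decide (x ≤ t)) ≤ (L.take i).length :=
            List.countP_le_length
        _ ≤ i := by simp [List.length_take]
    omega

lemma card_filter_eq_countP {m : ℕ} (p : Fin m → ℝ) (t : ℝ) :
    (Finset.univ.filter (fun j => p j ≤ t)).card
      = (Multiset.sort (Multiset.map p Finset.univ.val) (· ≤ ·)).countP
          (fun x => decide (x ≤ t)) := by
  have h1 : ((Multiset.sort (Multiset.map p Finset.univ.val) (· ≤ ·) : List ℝ) : Multiset ℝ)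
      = Multiset.map p Finset.univ.val := Multiset.sort_eq _ _
  have h2 : Multiset.countP (fun x => x ≤ t)
      ((Multiset.sort (Multiset.map p Finset.univ.val) (· ≤ ·) : List ℝ) : Multiset ℝ)
      = Multiset.countP (fun x => x ≤ t) (Multiset.map p Finset.univ.val) := by rw [h1]
  rw [Multiset.countP_map] at h2
  simp only [Multiset.coe_countP] at h2
  have h3 : (Finset.univ.filter (fun j => p j ≤ t)).card
      = Multiset.card (Multiset.filter (fun a => p a ≤ t) Finset.univ.val) := by
    rw [Finset.card, Finset.filter_val]
  rw [h3, ← h2]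

lemma card_BH {m : ℕ} (p : Fin m → ℝ) (α : ℝ)
    (hp : ∀ j, p j ∈ Set.Icc (0:ℝ) 1) (hα : α ∈ Set.Ioo (0:ℝ) 1) :
    (BH p α).card = kstar p α := by
  classical
  set L := Multiset.sort (Multiset.map p Finset.univ.val) (· ≤ ·) with hLdef
  have hLs : L.Pairwise (· ≤ ·) := Multiset.pairwise_sort _ _
  have hLlen : L.length = m := by
    simp [hLdef, Multiset.length_sort]
  set S : Set ℕ := {k | k ∈ Finset.Icc 1 m ∧ orderStat p k ≤ α * k / m} with hSdef
  have hbdd : BddAbove S := by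
    refine ⟨m, fun k hk => ?_⟩
    have := hk.1
    simp only [Finset.mem_Icc] at this
    exact this.2
  by_cases hne : S.Nonempty
  · have hK : kstar p α ∈ S := Nat.sSup_mem hne hbdd
    set K := kstar p α with hKdef
    obtain ⟨hKicc, hKle⟩ := hK
    simp only [Finset.mem_Icc] at hKicc
    have hm : 0 < m := lt_of_lt_of_le hKicc.1 hKicc.2
    have hK1 : K - 1 < L.length := by omega
    have hord : orderStat p K = L[K-1] := by
      rw [orderStat, ← hLdef, List.getD_eq_getElem _ _ hK1]
    have hcard : (BH p α).card = L.countP (fun x => decide (x ≤ α * K / m)) := by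
      rw [BH, ← hKdef, card_filter_eq_countP, hLdef]
    have hge : K ≤ L.countP (fun x => decide (x ≤ α * K / m)) := by
      have := (sorted_le_iff_countP hLs hK1 (α * K / m)).mp (by rw [← hord]; exact hKle)
      omega
    have hle : L.countP (fun x => decide (x ≤ α * K / m)) ≤ K := by
      by_contra hgt
      push_neg at hgt
      have hKm : K < m := by
        rcases lt_or_eq_of_le hKicc.2 with h | h
        · exact h
        · exfalso
          have := List.countP_le_length (l := L) (p := fun x => decide (x ≤ α * K / m))
          omega
      have hKlt : K < L.length := by omega
      have hLK : L[K] ≤ α * K / m :=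
        (sorted_le_iff_countP hLs hKlt (α * K / m)).mpr (by omega)
      have hmem : K + 1 ∈ S := by
        constructor
        · simp only [Finset.mem_Icc]; omega
        · have hord2 : orderStat p (K+1) = L[K] := by
            rw [orderStat, ← hLdef]
            simp only [Nat.add_sub_cancel]
            rw [List.getD_eq_getElem _ _ hKlt]
          rw [hord2]
          refine le_trans hLK ?_
          have hm' : (0:ℝ) < m := Nat.cast_pos.mpr hm
          rw [div_le_div_iff₀ hm' hm']
          push_cast
          nlinarith [hα.1.le]
      have hsup : sSup S = K := by rw [hSdef, hKdef, kstar]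
      have := le_csSup hbdd hmem
      rw [hsup] at this
      omega
    omega
  · have hS0 : S = ∅ := Set.not_nonempty_iff_eq_empty.mp hne
    have hK0 : kstar p α = 0 := by
      rw [kstar, ← hSdef, hS0, csSup_empty]; rfl
    rw [hK0]
    rw [BH, hK0]
    simp only [Nat.cast_zero, mul_zero, zero_div]
    rw [Finset.card_eq_zero, Finset.filter_eq_empty_iff]
    intro j _ hj
    have hm : 0 < m := j.pos
    have h0L : 0 < L.length := by omega
    have hc : 1 ≤ L.countP (fun x => decide (x ≤ (0:ℝ))) := by
      have : j ∈ Finset.univ.filter (fun j => p j ≤ (0:ℝ)) := by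
        simp [hj]
      have hcard := card_filter_eq_countP p (0:ℝ)
      rw [← hLdef] at hcard
      have : 0 < (Finset.univ.filter (fun j => p j ≤ (0:ℝ))).card :=
        Finset.card_pos.mpr ⟨j, this⟩
      omega
    have hL0 : L[0] ≤ (0:ℝ) := (sorted_le_iff_countP hLs h0L (0:ℝ)).mpr hc
    have hmem : 1 ∈ S := by
      constructor
      · simp only [Finset.mem_Icc]; omega
      · have : orderStat p 1 = L[0] := by
          rw [orderStat, ← hLdef]
          simpa using List.getD_eq_getElem _ _ h0L
        rw [this]
        refine le_trans hL0 ?_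
        have hm' : (0:ℝ) < m := Nat.cast_pos.mpr hm
        have hα0 : (0:ℝ) < α := hα.1
        positivity
    rw [hS0] at hmem
    exact hmem

/-- Self-consistency of BH: every `j ∈ S` satisfies `p_j ≤ α|S|/m`, and conversely
`{j : p_j ≤ α|S|/m} = S`, i.e. `S` is a fixed point of `R ↦ {j : p_j ≤ α|R|/m}`. -/
theorem BH_self_consistent {m : ℕ} (p : Fin m → ℝ) (α : ℝ)
    (hp : ∀ j, p j ∈ Set.Icc (0 : ℝ) 1) (hα : α ∈ Set.Ioo (0 : ℝ) 1) :
    (∀ j ∈ BH p α, p j ≤ α * (BH p α).card / m) ∧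
    Finset.univ.filter (fun j => p j ≤ α * (BH p α).card / m) = BH p α := by
  have hc := card_BH p α hp hα
  constructor
  · intro j hj
    rw [hc]
    rw [BH, Finset.mem_filter] at hj
    exact hj.2
  · rw [hc]
    rfl
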